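/- arXiv:2106.01996 — 6 statements merged into one kernel-verified Lean document; each statement's English description precedes it below -/
import Mathlib

section
/- Let δ be a p-derivation on a commutative ring R and a an ideal of R containing p. Then for every natural number k, δ maps a^{k+1} into a^k. -/
/-- The integer polynomial `C_p` evaluated in a commutative ring. -/
def cp {R : Type*} [CommRing R] (p : ℕ) (x y : R) : R :=
  -∑ i ∈ Finset.Ioo 0 p, ((p.choose i / p : ℕ) : R) * x ^ i * y ^ (p - i)

/-- A `p`-derivation on a commutative ring `R`. -/
def IsPDerivation {R : Type*} [CommRing R] (p : ℕ) (δ : R → R) : Prop :=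
  δ 0 = 0 ∧ δ 1 = 0 ∧
    (∀ x y : R, δ (x + y) = δ x + δ y + cp p x y) ∧
    (∀ x y : R, δ (x * y) = x ^ p * δ y + y ^ p * δ x + (p : R) * δ x * δ y)

lemma cp_mem_of_left_mem {R : Type*} [CommRing R] (p : ℕ) (I : Ideal R) {x : R}
    (hx : x ∈ I) (y : R) : cp p x y ∈ I := by
  refine neg_mem (Ideal.sum_mem _ fun i hi => ?_)
  have h1 : 0 < i := (Finset.mem_Ioo.mp hi).1
  have hxi : x ^ i ∈ I := by
    have := I.pow_mem_of_mem hx i h1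
    simpa using this
  exact Ideal.mul_mem_right _ _ (I.mul_mem_left _ hxi)

theorem pDerivation_map_pow_succ {R : Type*} [CommRing R] (p : ℕ)
    (hp : p.Prime) (δ : R → R) (hδ : IsPDerivation p δ)
    (a : Ideal R) (hpa : (p : R) ∈ a) (k : ℕ) :
    ∀ x ∈ a ^ (k + 1), δ x ∈ a ^ k := by
  obtain ⟨h0, h1, hadd, hmul⟩ := hδ
  induction k with
  | zero => intro x _; simp [Ideal.one_eq_top]
  | succ k ih =>
    intro x hx
    have hx' : x ∈ a ^ (k + 1) * a := by rwa [← pow_succ]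
    have : (x ∈ a ^ (k + 2) ∧ δ x ∈ a ^ (k + 1)) := by
      refine Submodule.mul_induction_on hx' ?_ ?_
      · intro m hm n hn
        have hmn : m * n ∈ a ^ (k + 2) := by
          rw [pow_succ]; exact Ideal.mul_mem_mul hm hn
        refine ⟨hmn, ?_⟩
        rw [hmul m n]
        have hmp : m ^ p ∈ a ^ (k + 1) :=
          (a ^ (k + 1)).pow_mem_of_mem hm p hp.pos
        have hdm : δ m ∈ a ^ k := ih m hm
        have hnp : n ^ p ∈ a := a.pow_mem_of_mem hn p hp.pos
        have t1 : m ^ p * δ n ∈ a ^ (k + 1) := Ideal.mul_mem_right _ _ hmp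
        have t2 : n ^ p * δ m ∈ a ^ (k + 1) := by
          rw [pow_succ']; exact Ideal.mul_mem_mul hnp hdm
        have t3 : (p : R) * δ m * δ n ∈ a ^ (k + 1) := by
          refine Ideal.mul_mem_right _ _ ?_
          rw [pow_succ']; exact Ideal.mul_mem_mul hpa hdm
        exact add_mem (add_mem t1 t2) t3
      · intro x y ⟨hx1, hx2⟩ ⟨hy1, hy2⟩
        refine ⟨add_mem hx1 hy1, ?_⟩
        rw [hadd x y]
        exact add_mem (add_mem hx2 hy2) (cp_mem_of_left_mem p _ (Ideal.pow_le_pow_right (by omega) hx1) y)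
    exact this.2
end

section
/- For any commutative ring R, prime integer p, and elements x, y ∈ R, one has (x+y)^{p^2} + p·C_p(x,y)^p ≡ x^{p^2} + y^{p^2} modulo p^2 R, where C_p(x,y) = -\sum_{i=1}^{p-1} (binom(p,i)/p) x^i y^{p-i}. -/
lemma map_cp {R S : Type*} [CommRing R] [CommRing S] (f : R →+* S) (p : ℕ) (x y : R) :
    f (cp p x y) = cp p (f x) (f y) := by
  simp [cp, map_sum, map_mul, map_pow, map_natCast]

lemma cp_pow_charP {S : Type*} [CommRing S] (p : ℕ) (hp : p.Prime) [CharP S p] (a b : S) :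
    cp p a b ^ p = cp p (a ^ p) (b ^ p) := by
  haveI : Fact p.Prime := ⟨hp⟩
  have h := map_cp (frobenius S p) p a b
  simpa [frobenius_def] using h

lemma cp_pow_sub_mem {R : Type*} [CommRing R] (p : ℕ) (hp : p.Prime) (x y : R) :
    cp p x y ^ p - cp p (x ^ p) (y ^ p) ∈ Ideal.span {(p : R)} := by
  by_cases hu : IsUnit (p : R)
  · rw [Ideal.span_singleton_eq_top.mpr hu]; exact Submodule.mem_top
  · haveI : Fact p.Prime := ⟨hp⟩
    haveI := CharP.quotient R p hu
    refine Ideal.Quotient.eq.mp ?_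
    rw [map_pow, map_cp, map_cp, map_pow, map_pow, cp_pow_charP p hp]

lemma add_pow_eq_sub_cp {R : Type*} [CommRing R] (p : ℕ) (hp : p.Prime) (x y : R) :
    (x + y) ^ p = x ^ p + y ^ p - (p : R) * cp p x y := by
  rw [add_pow_prime_eq' hp]
  have : ∑ k ∈ Finset.Ioo 0 p, x ^ k * y ^ (p - k) * ((p.choose k / p : ℕ) : R)
      = ∑ k ∈ Finset.Ioo 0 p, ((p.choose k / p : ℕ) : R) * x ^ k * y ^ (p - k) :=
    Finset.sum_congr rfl fun k _ => by ring
  rw [this, cp]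
  ring

theorem pow_p_sq_add_cp_pow {R : Type*} [CommRing R] (p : ℕ) (hp : p.Prime)
    (x y : R) :
    (x + y) ^ p ^ 2 + (p : R) * cp p x y ^ p - (x ^ p ^ 2 + y ^ p ^ 2) ∈
      Ideal.span {((p : R)) ^ 2} := by
  rw [Ideal.mem_span_singleton]
  set c := cp p x y with hc
  set c' := cp p (x ^ p) (y ^ p) with hc'
  have hsq : (x + y) ^ p ^ 2 = ((x + y) ^ p) ^ p := by rw [← pow_mul, sq]
  have hx : (x ^ p) ^ p = x ^ p ^ 2 := by rw [← pow_mul, sq]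
  have hy : (y ^ p) ^ p = y ^ p ^ 2 := by rw [← pow_mul, sq]
  have h1 : (x + y) ^ p = x ^ p + y ^ p + (-((p : R) * c)) := by
    rw [add_pow_eq_sub_cp p hp]; ring
  have h2 := add_pow_prime_eq' hp (x ^ p + y ^ p) (-((p : R) * c))
  have h3 : (x ^ p + y ^ p) ^ p = x ^ p ^ 2 + y ^ p ^ 2 - (p : R) * c' := by
    rw [add_pow_eq_sub_cp p hp, hx, hy]
  set T := ∑ k ∈ Finset.Ioo 0 p, (x ^ p + y ^ p) ^ k * (-((p : R) * c)) ^ (p - k)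
      * ((p.choose k / p : ℕ) : R) with hT
  have key : (x + y) ^ p ^ 2 + (p : R) * c ^ p - (x ^ p ^ 2 + y ^ p ^ 2)
      = (p : R) * (c ^ p - c') + (-((p : R) * c)) ^ p + (p : R) * T := by
    rw [hsq, h1, h2, h3]; ring
  rw [key]
  have d1 : (p : R) ^ 2 ∣ (p : R) * (c ^ p - c') := by
    obtain ⟨r, hr⟩ := Ideal.mem_span_singleton.mp (cp_pow_sub_mem p hp x y)
    exact ⟨r, by rw [hr]; ring⟩
  have d2 : (p : R) ^ 2 ∣ (-((p : R) * c)) ^ p := by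
    have : (-((p : R) * c)) ^ p = (-1 : R) ^ p * ((p : R) ^ p * c ^ p) := by
      rw [← neg_one_mul ((p:R)*c), mul_pow, mul_pow]
    rw [this]
    exact Dvd.dvd.mul_left (Dvd.dvd.mul_right (pow_dvd_pow _ hp.two_le) _) _
  have d3 : (p : R) ^ 2 ∣ (p : R) * T := by
    have hdT : (p : R) ∣ T := by
      refine Finset.dvd_sum fun k hk => ?_
      rw [Finset.mem_Ioo] at hk
      have : (p : R) ∣ (-((p : R) * c)) ^ (p - k) := by
        refine dvd_pow ⟨-c, by ring⟩ ?_
        omega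
      exact Dvd.dvd.mul_right (Dvd.dvd.mul_left this _) _
    obtain ⟨r, hr⟩ := hdT
    exact ⟨r, by rw [hr]; ring⟩
  exact dvd_add (dvd_add d1 d2) d3
end

section
/- For a prime p and integers 0 ≤ m ≤ n, the congruence binom(pn, pm) ≡ binom(n, m) holds modulo p^2. -/
open Polynomial

lemma aux_coeff_pow (p N j : ℕ) :
    ((1 + X ^ p : ℤ[X]) ^ N).coeff j
      = ∑ k ∈ Finset.range (N + 1), if j = p * k then (N.choose k : ℤ) else 0 := by
  rw [add_comm, add_pow, finset_sum_coeff]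
  apply Finset.sum_congr rfl
  intro k _
  rw [one_pow, mul_one, ← pow_mul, ← C_eq_natCast, coeff_mul_C, coeff_X_pow]
  split_ifs <;> simp

/-- Coefficients of `(1 + X^p)^N` over ℤ vanish at non-multiples of `p`. -/
lemma aux_coeff_not_dvd (p N j : ℕ) (hj : ¬ p ∣ j) :
    ((1 + X ^ p : ℤ[X]) ^ N).coeff j = 0 := by
  rw [aux_coeff_pow]
  apply Finset.sum_eq_zero
  intro k _
  rw [if_neg]
  intro h
  exact hj ⟨k, h⟩

/-- Coefficient of `(1 + X^p)^N` at `p*m` is `N.choose m`. -/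
lemma aux_coeff_dvd (p : ℕ) (hp : 0 < p) (N m : ℕ) :
    ((1 + X ^ p : ℤ[X]) ^ N).coeff (p * m) = N.choose m := by
  rw [aux_coeff_pow]
  have : ∀ k ∈ Finset.range (N + 1),
      (if p * m = p * k then (N.choose k : ℤ) else 0)
        = if k = m then (N.choose k : ℤ) else 0 := by
    intro k _
    have hiff : p * m = p * k ↔ k = m :=
      ⟨fun h => (Nat.eq_of_mul_eq_mul_left hp h).symm, fun h => by rw [h]⟩
    simp only [hiff]
  rw [Finset.sum_congr rfl this, Finset.sum_ite_eq' (Finset.range (N + 1)) m]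
  rcases le_or_gt m N with hmN | hmN
  · rw [if_pos (Finset.mem_range.mpr (Nat.lt_succ_of_le hmN))]
  · rw [if_neg (by simp only [Finset.mem_range]; omega), Nat.choose_eq_zero_of_lt hmN, Nat.cast_zero]

/-- Second-order binomial expansion in a commutative ring. -/
lemma aux_add_pow_second_order {R : Type*} [CommRing R] (A B : R) (n : ℕ) :
    ∃ c : R, (A + B) ^ n = A ^ n + n * A ^ (n - 1) * B + B ^ 2 * c := by
  induction n with
  | zero => exact ⟨0, by simp⟩
  | succ k ih =>
    obtain ⟨c, hc⟩ := ih
    rcases Nat.eq_zero_or_pos k with hk | hk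
    · subst hk; exact ⟨0, by ring⟩
    · refine ⟨A * c + (k : R) * A ^ (k - 1) + B * c, ?_⟩
      have hA : A * A ^ (k - 1) = A ^ k := by
        rw [← pow_succ']
        congr 1
        omega
      calc (A + B) ^ (k + 1) = (A + B) ^ k * (A + B) := by rw [pow_succ]
        _ = (A ^ k + k * A ^ (k - 1) * B + B ^ 2 * c) * (A + B) := by rw [hc]
        _ = A ^ k * A + (k : R) * (A * A ^ (k - 1)) * B + A ^ k * B
              + B ^ 2 * (A * c + (k : R) * A ^ (k - 1) + B * c) := by ring
        _ = A ^ (k + 1) + (k + 1 : ℕ) * A ^ k * B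
              + B ^ 2 * (A * c + (k : R) * A ^ (k - 1) + B * c) := by
              rw [hA, ← pow_succ]
              push_cast
              ring
        _ = _ := by simp

/-- `(1+X)^p = 1 + X^p + p*E` where `E` vanishes at multiples of `p`. -/
lemma aux_freshman (p : ℕ) (hp : p.Prime) :
    ∃ E : ℤ[X], (1 + X : ℤ[X]) ^ p = 1 + X ^ p + (p : ℤ[X]) * E ∧
      ∀ k, p ∣ k → E.coeff k = 0 := by
  have hcoeff : ∀ k, ((1 + X : ℤ[X]) ^ p - 1 - X ^ p).coeff k
      = (p.choose k : ℤ) - (if k = 0 then 1 else 0) - (if k = p then 1 else 0) := by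
    intro k
    rw [coeff_sub, coeff_sub, add_comm, coeff_X_add_one_pow, coeff_one, coeff_X_pow]
  have hdvd : C (p : ℤ) ∣ ((1 + X : ℤ[X]) ^ p - 1 - X ^ p) := by
    rw [C_dvd_iff_dvd_coeff]
    intro k
    rw [hcoeff]
    rcases Nat.eq_zero_or_pos k with hk0 | hk0
    · subst hk0
      rw [if_pos rfl, if_neg hp.pos.ne, Nat.choose_zero_right]
      simp
    rcases lt_trichotomy k p with hkp | hkp | hkp
    · rw [if_neg hk0.ne', if_neg hkp.ne]
      simpa using Int.natCast_dvd_natCast.mpr (hp.dvd_choose_self hk0.ne' hkp)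
    · subst hkp
      rw [if_pos rfl, if_neg hk0.ne', Nat.choose_self]
      simp
    · rw [Nat.choose_eq_zero_of_lt hkp, if_neg hk0.ne', if_neg hkp.ne']
      simp
  obtain ⟨E, hE⟩ := hdvd
  refine ⟨E, ?_, ?_⟩
  · rw [← C_eq_natCast, ← hE]; ring
  · intro k hk
    have h0 : ((1 + X : ℤ[X]) ^ p - 1 - X ^ p).coeff k = 0 := by
      rw [hcoeff]
      rcases Nat.eq_zero_or_pos k with hk0 | hk0
      · subst hk0
        rw [if_pos rfl, if_neg hp.pos.ne, Nat.choose_zero_right]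
        simp
      rcases lt_trichotomy k p with hkp | hkp | hkp
      · exact absurd (Nat.le_of_dvd hk0 hk) (not_le.mpr hkp)
      · subst hkp
        rw [if_pos rfl, if_neg hk0.ne', Nat.choose_self]
        simp
      · rw [Nat.choose_eq_zero_of_lt hkp, if_neg hk0.ne', if_neg hkp.ne']
        simp
    have := h0
    rw [hE, coeff_C_mul] at this
    exact (mul_eq_zero.mp this).resolve_left (by exact_mod_cast hp.pos.ne')

theorem choose_mul_prime_mod_sq (p : ℕ) (hp : p.Prime) (m n : ℕ) (hmn : m ≤ n) :
    (((p * n).choose (p * m) : ℤ)) ≡ ((n.choose m : ℕ) : ℤ) [ZMOD ((p : ℤ) ^ 2)] := by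
  obtain ⟨E, hE, hEcoeff⟩ := aux_freshman p hp
  obtain ⟨c, hc⟩ := aux_add_pow_second_order (1 + X ^ p : ℤ[X]) ((p : ℤ[X]) * E) n
  have key : ((1 + X : ℤ[X]) ^ (p * n)).coeff (p * m)
      = (n.choose m : ℤ) + (p : ℤ) ^ 2 * ((E ^ 2 * c).coeff (p * m)) := by
    rw [pow_mul, hE, hc]
    rw [coeff_add, coeff_add, aux_coeff_dvd p hp.pos n m]
    have hmid : ((n : ℤ[X]) * (1 + X ^ p) ^ (n - 1) * ((p : ℤ[X]) * E)).coeff (p * m)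
        = 0 := by
      have hconv : (((1 + X ^ p : ℤ[X]) ^ (n - 1)) * E).coeff (p * m) = 0 := by
        rw [coeff_mul]
        apply Finset.sum_eq_zero
        intro x hx
        rw [Finset.HasAntidiagonal.mem_antidiagonal] at hx
        by_cases h : p ∣ x.1
        · have h2 : p ∣ x.2 := (Nat.dvd_add_right h).mp (hx ▸ Dvd.intro m rfl)
          rw [hEcoeff x.2 h2, mul_zero]
        · rw [aux_coeff_not_dvd p (n - 1) x.1 h, zero_mul]
      have : ((n : ℤ[X]) * (1 + X ^ p) ^ (n - 1) * ((p : ℤ[X]) * E))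
          = (C ((n : ℤ) * p)) * (((1 + X ^ p : ℤ[X]) ^ (n - 1)) * E) := by
        push_cast [← C_eq_natCast, C_mul]
        ring
      rw [this, coeff_C_mul, hconv, mul_zero]
    rw [hmid, add_zero]
    have : (((p : ℤ[X]) * E) ^ 2 * c) = C ((p : ℤ) ^ 2) * (E ^ 2 * c) := by
      push_cast [← C_eq_natCast, C_mul, C_pow]
      ring
    rw [this, coeff_C_mul]
  rw [add_comm, coeff_X_add_one_pow] at key
  have : ((p : ℤ) ^ 2) ∣ ((n.choose m : ℤ) - ((p * n).choose (p * m) : ℤ)) := by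
    rw [key]
    exact ⟨-((E ^ 2 * c).coeff (p * m)), by ring⟩
  exact (Int.modEq_iff_dvd).mpr this
end

section
/- Let p be a prime, R a commutative ring, and α : R → M a perivation into an R/pR-module M. Then for every integer n, α(n) = ((n - n^p)/p) · α(p), where (n-n^p)/p is the integer guaranteed by Fermat's little theorem. In other words, every perivation restricts trivially to Z. -/
/-- A perivation from `R` to an `R/pR`-module `M`. -/
def IsPerivation {R M : Type*} [CommRing R] [AddCommGroup M] [Module R M]
    (p : ℕ) (α : R → M) : Prop :=
  α 0 = 0 ∧ α 1 = 0 ∧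
    (∀ x y : R, α (x + y) = α x + α y + cp p x y • α (p : R)) ∧
    (∀ x y : R, α (x * y) = x ^ p • α y + y ^ p • α x)

theorem perivation_int {R M : Type*} [CommRing R] [AddCommGroup M] [Module R M]
    (p : ℕ) (hp : p.Prime) (hM : ∀ m : M, (p : R) • m = 0)
    (α : R → M) (hα : IsPerivation p α) (n : ℤ) :
    α ((n : R)) = (((n - n ^ p) / (p : ℤ)) : ℤ) • α ((p : R)) := by
  obtain ⟨h0, h1, hadd, hmul⟩ := hα
  haveI : Fact p.Prime := ⟨hp⟩
  have hp0 : (p : ℤ) ≠ 0 := by exact_mod_cast hp.ne_zero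
  -- Fermat: p ∣ k - k^p
  have hd : ∀ k : ℤ, (p : ℤ) ∣ (k - k ^ p) := by
    intro k
    have h : ((k - k ^ p : ℤ) : ZMod p) = 0 := by
      push_cast
      rw [ZMod.pow_card]
      ring
    exact (ZMod.intCast_zmod_eq_zero_iff_dvd _ _).mp h
  -- the integer coefficient
  set c : ℤ → ℤ := fun m => -∑ i ∈ Finset.Ioo 0 p, ((p.choose i / p : ℕ) : ℤ) * m ^ i with hc
  -- p * c m
  have hpc : ∀ m : ℤ, (p : ℤ) * c m = -∑ i ∈ Finset.Ioo 0 p, (p.choose i : ℤ) * m ^ i := by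
    intro m
    rw [hc]
    simp only [mul_neg, Finset.mul_sum, neg_inj, ← mul_assoc]
    apply Finset.sum_congr rfl
    intro i hi
    simp only [Finset.mem_Ioo] at hi
    have hdvd : p ∣ p.choose i := hp.dvd_choose_self (by omega) hi.2
    congr 1
    rw [← Nat.cast_mul, Nat.mul_div_cancel' hdvd]
  -- key coefficient identity
  have key : ∀ m : ℤ, ((m + 1) - (m + 1) ^ p) / p = (m - m ^ p) / p + c m := by
    intro m
    apply mul_left_cancel₀ hp0
    rw [Int.mul_ediv_cancel' (hd (m + 1)), mul_add, Int.mul_ediv_cancel' (hd m), hpc m]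
    have hexp : (m + 1) ^ p = ∑ k ∈ Finset.range (p + 1), m ^ k * (p.choose k : ℤ) := by
      rw [add_pow]
      simp
    have hsplit : Finset.range (p + 1) = insert 0 (insert p (Finset.Ioo 0 p)) := by
      ext i
      simp only [Finset.mem_range, Finset.mem_insert, Finset.mem_Ioo]
      omega
    rw [hexp, hsplit, Finset.sum_insert, Finset.sum_insert]
    · simp only [pow_zero, one_mul, Nat.choose_zero_right, Nat.choose_self, Nat.cast_one,
        mul_one]
      ring_nf
    · have hpos := hp.pos
      simp only [Finset.mem_Ioo]; omega
    · have hpos := hp.pos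
      simp only [Finset.mem_insert, Finset.mem_Ioo]; omega
  -- cp in R is the cast of c
  have hcp : ∀ m : ℤ, cp p ((m : ℤ) : R) 1 • α (p : R) = c m • α (p : R) := by
    intro m
    rw [← Int.cast_smul_eq_zsmul R (c m)]
    congr 1
    simp only [hc, cp, one_pow, mul_one, Int.cast_neg, Int.cast_sum, Int.cast_mul, Int.cast_pow,
      Int.cast_natCast]
  -- step
  have step : ∀ m : ℤ, α ((m : R) + 1) = α (m : R) + c m • α (p : R) := by
    intro m
    rw [hadd, h1, add_zero, hcp]
  induction n using Int.induction_on with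
  | zero => simp [h0, zero_pow hp.ne_zero]
  | succ k ih =>
    have hcast : ((k + 1 : ℤ) : R) = ((k : ℤ) : R) + 1 := by push_cast; ring
    rw [hcast, step k, ih, key k, add_smul]
  | pred k ih =>
    have hcast : ((-k : ℤ) : R) = ((-k - 1 : ℤ) : R) + 1 := by push_cast; ring
    have h2 := step (-(k : ℤ) - 1)
    rw [← hcast, ih] at h2
    have hk := key (-(k : ℤ) - 1)
    rw [show (-(k : ℤ) - 1 + 1) = -(k : ℤ) from by ring] at hk
    rw [hk, add_smul] at h2
    exact (add_right_cancel h2).symm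
end

section
/- Let p be a prime, R a commutative ring, I an ideal of R, M an R/pR-module, and α : R → M a perivation with α(I) ⊆ IM. Then α descends to a well-defined perivation α' : R/I → M/IM, i.e., α(r) mod IM depends only on r mod I, and the induced map satisfies the perivation axioms. -/
lemma cp_mem_right {R : Type*} [CommRing R] (p : ℕ) (I : Ideal R) (x : R) {a : R}
    (ha : a ∈ I) : cp p x a ∈ I := by
  unfold cp
  refine I.neg_mem (Ideal.sum_mem I fun i hi => ?_)
  obtain ⟨h0, hlt⟩ := Finset.mem_Ioo.mp hi
  exact Ideal.mul_mem_left _ _ (I.pow_mem_of_mem ha _ (Nat.sub_pos_of_lt hlt))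

theorem perivation_descends {R M : Type*} [CommRing R] [AddCommGroup M] [Module R M]
    (p : ℕ) (hp : p.Prime) (hM : ∀ m : M, (p : R) • m = 0)
    (α : R → M) (hα : IsPerivation p α) (I : Ideal R)
    (hI : ∀ a ∈ I, α a ∈ I • (⊤ : Submodule R M)) :
    ∃ α' : R ⧸ I → M ⧸ (I • (⊤ : Submodule R M)),
      (∀ r : R, α' (Ideal.Quotient.mk I r) = Submodule.Quotient.mk (α r)) ∧
      α' 0 = 0 ∧ α' 1 = 0 ∧
      (∀ x y : R, α' (Ideal.Quotient.mk I (x + y)) =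
          α' (Ideal.Quotient.mk I x) + α' (Ideal.Quotient.mk I y) +
            cp p x y • (Submodule.Quotient.mk (α ((p : R))) :
              M ⧸ (I • (⊤ : Submodule R M)))) ∧
      (∀ x y : R, α' (Ideal.Quotient.mk I (x * y)) =
          x ^ p • α' (Ideal.Quotient.mk I y) + y ^ p • α' (Ideal.Quotient.mk I x)) := by
  obtain ⟨h0, h1, hadd, hmul⟩ := hα
  have key : ∀ r s : R, r - s ∈ I →
      (Submodule.Quotient.mk (α r) : M ⧸ (I • (⊤ : Submodule R M))) =
        Submodule.Quotient.mk (α s) := by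
    intro r s h
    rw [Submodule.Quotient.eq]
    have hr : r = s + (r - s) := by ring
    rw [hr, hadd s (r - s)]
    have h1 : α (r - s) ∈ I • (⊤ : Submodule R M) := hI _ h
    have h2 : cp p s (r - s) • α (p : R) ∈ I • (⊤ : Submodule R M) :=
      Submodule.smul_mem_smul (cp_mem_right p I s h) trivial
    have : α s + α (r - s) + cp p s (r - s) • α (p : R) - α s =
        α (r - s) + cp p s (r - s) • α (p : R) := by abel
    rw [this]
    exact Submodule.add_mem _ h1 h2
  refine ⟨fun q => Quotient.liftOn' q (fun r => Submodule.Quotient.mk (α r))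
    (fun r s h => key r s ?_), ?_, ?_, ?_, ?_, ?_⟩
  · rwa [Submodule.quotientRel_def] at h
  · intro r; rfl
  · show (Submodule.Quotient.mk (α 0) : M ⧸ _) = 0
    rw [h0]; rfl
  · show (Submodule.Quotient.mk (α 1) : M ⧸ _) = 0
    rw [h1]; rfl
  · intro x y
    show (Submodule.Quotient.mk (α (x + y)) : M ⧸ _) = _
    rw [hadd x y]
    simp only [Submodule.Quotient.mk_add, Submodule.Quotient.mk_smul]
    rfl
  · intro x y
    show (Submodule.Quotient.mk (α (x * y)) : M ⧸ _) = _
    rw [hmul x y]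
    simp only [Submodule.Quotient.mk_add, Submodule.Quotient.mk_smul]
    rfl
end

section
/- Let p be a prime, R a commutative ring, I an ideal, M an R/pR-module, and α : R → M a perivation. Then the induced map I/(I^2 + pI) → M/IM, [a] ↦ α(a) mod IM, is well-defined, additive, and p-linear over R/pR: for r ∈ R and a ∈ I, α(ra) ≡ r^p α(a) modulo IM. -/
lemma cp_mem_of_right {R : Type*} [CommRing R] (p : ℕ) {I : Ideal R} {x y : R}
    (hy : y ∈ I) : cp p x y ∈ I := by
  unfold cp
  refine neg_mem (Ideal.sum_mem _ fun i hi => Ideal.mul_mem_left _ _ ?_)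
  have : 0 < p - i := by simp only [Finset.mem_Ioo] at hi; omega
  exact Ideal.pow_mem_of_mem I hy _ this

lemma perivation_aux {R M : Type*} [CommRing R] [AddCommGroup M] [Module R M]
    (p : ℕ) (hp : p.Prime) (hM : ∀ m : M, (p : R) • m = 0)
    (α : R → M) (hα : IsPerivation p α) (I : Ideal R) :
    ∀ c ∈ I * I + Ideal.span {(p : R)} * I,
      c ∈ I ∧ α c ∈ I • (⊤ : Submodule R M) := by
  obtain ⟨h0, h1, hadd, hmul⟩ := hα
  intro c hc
  rw [Submodule.add_eq_sup, Submodule.mem_sup] at hc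
  obtain ⟨x, hx, y, hy, rfl⟩ := hc
  have key₁ : x ∈ I ∧ α x ∈ I • (⊤ : Submodule R M) := by
    refine Submodule.mul_induction_on hx ?_ ?_
    · intro m hm n hn
      refine ⟨I.mul_mem_right _ hm, ?_⟩
      rw [hmul]
      exact Submodule.add_mem _
        (Submodule.smul_mem_smul (Ideal.pow_mem_of_mem I hm _ hp.pos) trivial)
        (Submodule.smul_mem_smul (Ideal.pow_mem_of_mem I hn _ hp.pos) trivial)
    · rintro a b ⟨haI, haM⟩ ⟨hbI, hbM⟩
      refine ⟨I.add_mem haI hbI, ?_⟩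
      rw [hadd]
      exact Submodule.add_mem _ (Submodule.add_mem _ haM hbM)
        (Submodule.smul_mem_smul (cp_mem_of_right p hbI) trivial)
  have key₂ : y ∈ I ∧ α y ∈ I • (⊤ : Submodule R M) := by
    refine Submodule.mul_induction_on hy ?_ ?_
    · intro m hm n hn
      obtain ⟨t, rfl⟩ := Ideal.mem_span_singleton.mp hm
      refine ⟨I.mul_mem_left _ hn, ?_⟩
      rw [hmul]
      have hz : ((p : R) * t) ^ p • α n = 0 := by
        obtain ⟨s, hs⟩ := dvd_pow (dvd_mul_right (p : R) t) hp.ne_zero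
        rw [hs, mul_smul, hM]
      rw [hz, zero_add]
      exact Submodule.smul_mem_smul (Ideal.pow_mem_of_mem I hn _ hp.pos) trivial
    · rintro a b ⟨haI, haM⟩ ⟨hbI, hbM⟩
      refine ⟨I.add_mem haI hbI, ?_⟩
      rw [hadd]
      exact Submodule.add_mem _ (Submodule.add_mem _ haM hbM)
        (Submodule.smul_mem_smul (cp_mem_of_right p hbI) trivial)
  refine ⟨I.add_mem key₁.1 key₂.1, ?_⟩
  rw [hadd]
  exact Submodule.add_mem _ (Submodule.add_mem _ key₁.2 key₂.2)
    (Submodule.smul_mem_smul (cp_mem_of_right p key₂.1) trivial)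

theorem perivation_restriction_p_linear {R M : Type*} [CommRing R] [AddCommGroup M]
    [Module R M] (p : ℕ) (hp : p.Prime) (hM : ∀ m : M, (p : R) • m = 0)
    (α : R → M) (hα : IsPerivation p α) (I : Ideal R) :
    (∀ a b : R, a ∈ I → b ∈ I → a - b ∈ I * I + Ideal.span {(p : R)} * I →
      (Submodule.Quotient.mk (α a) : M ⧸ (I • (⊤ : Submodule R M))) =
        Submodule.Quotient.mk (α b)) ∧
    (∀ a b : R, a ∈ I → b ∈ I →
      (Submodule.Quotient.mk (α (a + b)) : M ⧸ (I • (⊤ : Submodule R M))) =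
        Submodule.Quotient.mk (α a) + Submodule.Quotient.mk (α b)) ∧
    (∀ (r : R), ∀ a ∈ I,
      (Submodule.Quotient.mk (α (r * a)) : M ⧸ (I • (⊤ : Submodule R M))) =
        r ^ p • Submodule.Quotient.mk (α a)) := by
  obtain ⟨h0, h1, hadd, hmul⟩ := hα
  refine ⟨?_, ?_, ?_⟩
  · intro a b ha hb hab
    obtain ⟨hcI, hcM⟩ := perivation_aux p hp hM α ⟨h0, h1, hadd, hmul⟩ I _ hab
    rw [Submodule.Quotient.eq]
    have hAa : α a = α b + α (a - b) + cp p b (a - b) • α (p : R) := by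
      conv_lhs => rw [show a = b + (a - b) by ring]
      exact hadd b (a - b)
    rw [hAa, show α b + α (a - b) + cp p b (a - b) • α (p : R) - α b
        = α (a - b) + cp p b (a - b) • α (p : R) by abel]
    exact Submodule.add_mem _ hcM
      (Submodule.smul_mem_smul (cp_mem_of_right p hcI) trivial)
  · intro a b ha hb
    rw [← Submodule.Quotient.mk_add, Submodule.Quotient.eq, hadd,
      show α a + α b + cp p a b • α (p : R) - (α a + α b) = cp p a b • α (p : R) by abel]
    exact Submodule.smul_mem_smul (cp_mem_of_right p hb) trivial
  · intro r a ha
    rw [← Submodule.Quotient.mk_smul, Submodule.Quotient.eq, hmul,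
      show r ^ p • α a + a ^ p • α r - r ^ p • α a = a ^ p • α r by abel]
    exact Submodule.smul_mem_smul (Ideal.pow_mem_of_mem I ha _ hp.pos) trivial
end
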